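/- Let (ξ_n)_{n≥1} be a σ-bounded martingale-difference sequence in ℝ^d with respect to a filtration (𝓕_n), and let (γ_n)_{n≥1} be a sequence in (0,1] such that Σ_n γ_n = ∞ and Σ_n λ^{1/γ_n} < ∞ for every λ ∈ (0,1). Define τ_n := Σ_{j=1}^{n−1} γ_j. Then for every T > 0, almost surely lim_{n→∞} sup{ ‖ Σ_{j=n}^{m−1} γ_j ξ_j ‖ : m ≥ n and τ_m − τ_n ≤ T } = 0; that is, the accumulated weighted noise over every time window of effective length at most T vanishes almost surely. -/

import Mathlib

open MeasureTheory Filter Topology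
open scoped NNReal ENNReal

lemma aux_integrable {Ω : Type*} {m0 : MeasurableSpace Ω} {μ : Measure Ω} [IsFiniteMeasure μ]
    {f : Ω → ℝ} (hf : AEStronglyMeasurable f μ) {C : ℝ} (h : ∀ᵐ ω ∂μ, |f ω| ≤ C) :
    Integrable f μ :=
  (integrable_const C).mono' hf (by simpa [Real.norm_eq_abs] using h)

lemma aux_exp_quad (x : ℝ) (h : |x| ≤ 1) : Real.exp x ≤ 1 + x + x ^ 2 := by
  have := Real.exp_bound h (n := 3) (by norm_num)
  have h2 : |Real.exp x - (1 + x + x^2/2)| ≤ |x|^3 * (4/18) := by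
    convert this using 2
    all_goals simp [Finset.sum_range_succ, Nat.factorial]
    all_goals try ring
    all_goals norm_num
  have h3 : |x|^3 ≤ x^2 := by
    calc |x|^3 = |x|^2 * |x| := by ring
    _ ≤ |x|^2 * 1 := by nlinarith [sq_nonneg (|x|), abs_nonneg x]
    _ = x^2 := by rw [mul_one, sq_abs]
  have := abs_le.1 h2
  nlinarith [sq_nonneg x]

lemma aux_coord_le_norm {d : ℕ} (v : EuclideanSpace ℝ (Fin d)) (i : Fin d) : abs (v i) ≤ ‖v‖ := by
  rw [EuclideanSpace.norm_eq]
  have : abs (v i) = Real.sqrt (‖v i‖^2) := by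
    rw [Real.sqrt_sq_eq_abs]; simp [Real.norm_eq_abs, abs_abs]
  rw [this]
  apply Real.sqrt_le_sqrt
  exact Finset.single_le_sum (f := fun j => ‖v j‖^2) (fun j _ => sq_nonneg _) (Finset.mem_univ i)

lemma aux_norm_le_sum {d : ℕ} (v : EuclideanSpace ℝ (Fin d)) : ‖v‖ ≤ ∑ i, abs (v i) := by
  rw [EuclideanSpace.norm_eq]
  have h1 : ∑ i, ‖v i‖^2 ≤ (∑ i, abs (v i))^2 := by
    simpa [Real.norm_eq_abs] using
      Finset.sum_sq_le_sq_sum_of_nonneg (s := Finset.univ) (f := fun i => abs (v i))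
      (fun i _ => abs_nonneg _)
  calc Real.sqrt (∑ i, ‖v i‖^2) ≤ Real.sqrt ((∑ i, abs (v i))^2) := Real.sqrt_le_sqrt h1
  _ = |∑ i, abs (v i)| := Real.sqrt_sq_eq_abs _
  _ = ∑ i, abs (v i) := abs_of_nonneg (Finset.sum_nonneg fun i _ => abs_nonneg _)

lemma aux_condexp_clm_zero {Ω : Type*} {m m0 : MeasurableSpace Ω} {μ : Measure Ω}
    [IsFiniteMeasure μ] (hm : m ≤ m0)
    {E F : Type*} [NormedAddCommGroup E] [NormedSpace ℝ E] [CompleteSpace E]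
    [NormedAddCommGroup F] [NormedSpace ℝ F] [CompleteSpace F]
    (L : E →L[ℝ] F) {f : Ω → E} (hf : Integrable f μ) (h : μ[f|m] =ᵐ[μ] 0) :
    μ[fun ω => L (f ω)|m] =ᵐ[μ] 0 := by
  refine (ae_eq_condExp_of_forall_setIntegral_eq hm (L.integrable_comp hf)
    (fun s _ _ => (integrable_zero _ _ μ).integrableOn) (fun s hs hμs => ?_)
    aestronglyMeasurable_zero).symm
  have h1 : ∫ x in s, L (f x) ∂μ = L (∫ x in s, f x ∂μ) :=
    L.integral_comp_comm hf.integrableOn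
  have h2 : ∫ x in s, f x ∂μ = ∫ x in s, (μ[f|m]) x ∂μ := (setIntegral_condExp hm hf hs).symm
  have h3 : ∫ x in s, (μ[f|m]) x ∂μ = ∫ x in s, (0 : E) ∂μ :=
    setIntegral_congr_ae (hm s hs) (h.mono fun x hx _ => hx)
  simp [h1, h2, h3]

lemma aux_condexp_exp_le {Ω : Type*} {m m0 : MeasurableSpace Ω} {μ : Measure Ω}
    [IsProbabilityMeasure μ] (hm : m ≤ m0)
    {η : Ω → ℝ} (hη : AEStronglyMeasurable η μ) {σ : ℝ} (hσ : 0 ≤ σ)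
    (hbd : ∀ᵐ ω ∂μ, |η ω| ≤ σ) (hzero : μ[η|m] =ᵐ[μ] 0)
    {c : ℝ} (hc : |c| * σ ≤ 1) :
    μ[fun ω => Real.exp (c * η ω)|m] ≤ᵐ[μ] fun _ => 1 + c ^ 2 * σ ^ 2 := by
  have hbd1 : ∀ᵐ ω ∂μ, |c * η ω| ≤ 1 := by
    filter_upwards [hbd] with ω hω
    calc |c * η ω| = |c| * |η ω| := abs_mul _ _
    _ ≤ |c| * σ := by gcongr
    _ ≤ 1 := hc
  have hint_η : Integrable η μ := aux_integrable hη hbd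
  have hη2 : AEStronglyMeasurable (fun ω => (η ω)^2) μ :=
    (hη.mul hη).congr (by filter_upwards with ω using (sq (η ω)).symm)
  have hint_η2 : Integrable (fun ω => (η ω)^2) μ := by
    refine aux_integrable hη2 (C := σ^2) (hbd.mono fun ω hω => ?_)
    rw [abs_pow]
    exact pow_le_pow_left₀ (abs_nonneg _) hω 2
  have hint_exp : Integrable (fun ω => Real.exp (c * η ω)) μ := by
    refine aux_integrable (Real.continuous_exp.comp_aestronglyMeasurable (hη.const_mul c))
      (C := Real.exp 1) (hbd1.mono fun ω hω => ?_)
    rw [abs_of_pos (Real.exp_pos _)]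
    exact Real.exp_le_exp.2 ((le_abs_self _).trans hω)
  have hint_rhs : Integrable (fun ω => 1 + c * η ω + (c * η ω)^2) μ := by
    refine aux_integrable ((aestronglyMeasurable_const.add (hη.const_mul c)).add
      (((hη.const_mul c).mul (hη.const_mul c)).congr
        (by filter_upwards with ω using (sq (c * η ω)).symm)))
      (C := 3) (hbd1.mono fun ω hω => ?_)
    have h1 : |c * η ω| ^ 2 ≤ 1 := by nlinarith [abs_nonneg (c * η ω)]
    have := abs_le.1 hω
    rw [abs_le]
    constructor <;> nlinarith [sq_abs (c * η ω)]
  have step1 : μ[fun ω => Real.exp (c * η ω)|m] ≤ᵐ[μ] μ[fun ω => 1 + c * η ω + (c * η ω)^2|m] := by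
    refine condExp_mono hint_exp hint_rhs (hbd1.mono fun ω hω => aux_exp_quad _ hω)
  -- decompose the rhs conditional expectation
  have hdec : (fun ω => 1 + c * η ω + (c * η ω)^2)
      = (fun ω => (1 : ℝ) + c * η ω) + fun ω => c^2 * (η ω)^2 := by
    funext ω; simp [Pi.add_apply]; ring
  have hint_lin : Integrable (fun ω => (1:ℝ) + c * η ω) μ :=
    (integrable_const 1).add (hint_η.const_mul c)
  have hlin : μ[fun ω => (1:ℝ) + c * η ω|m] =ᵐ[μ] fun _ => 1 := by
    have h1 : (fun ω => (1:ℝ) + c * η ω) = (fun _ => (1:ℝ)) + fun ω => c * η ω := by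
      funext ω; simp [Pi.add_apply]
    rw [h1]
    refine (condExp_add (integrable_const 1) (hint_η.const_mul c) m).trans ?_
    have h2 : μ[fun ω => c * η ω|m] =ᵐ[μ] c • μ[η|m] := by
      refine EventuallyEq.trans (condExp_congr_ae ?_) (condExp_smul (μ := μ) (m := m) c η)
      filter_upwards with x
      simp
    rw [condExp_const hm]
    filter_upwards [h2, hzero] with ω h2 hz
    simp only [Pi.add_apply, Pi.smul_apply, smul_eq_mul] at *
    rw [h2, hz]
    simp
  have hsq : μ[fun ω => c^2 * (η ω)^2|m] ≤ᵐ[μ] fun _ => c^2 * σ^2 := by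
    have h1 : μ[fun ω => c^2 * (η ω)^2|m] =ᵐ[μ] c^2 • μ[fun ω => (η ω)^2|m] := by
      have := condExp_smul (μ := μ) (m := m) (c^2) (fun ω => (η ω)^2)
      refine EventuallyEq.trans (condExp_congr_ae ?_) this
      filter_upwards with ω; simp
    have h2 : μ[fun ω => (η ω)^2|m] ≤ᵐ[μ] fun _ => σ^2 := by
      have h4 : ∀ᵐ ω ∂μ, (η ω)^2 ≤ σ^2 := hbd.mono fun ω hω => by
        calc (η ω)^2 = |η ω|^2 := (sq_abs _).symm
        _ ≤ σ^2 := pow_le_pow_left₀ (abs_nonneg _) hω 2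
      have h5 := condExp_mono (μ := μ) (m := m) hint_η2
        (integrable_const (σ^2)) h4
      rwa [condExp_const hm] at h5
    filter_upwards [h1, h2] with ω h1 h2
    rw [h1]
    simp only [Pi.smul_apply, smul_eq_mul]
    nlinarith [sq_nonneg c]
  refine step1.trans ?_
  have hadd : μ[fun ω => 1 + c * η ω + (c * η ω)^2|m]
      =ᵐ[μ] μ[fun ω => (1:ℝ) + c * η ω|m] + μ[fun ω => c^2 * (η ω)^2|m] := by
    refine EventuallyEq.trans (condExp_congr_ae ?_) (condExp_add hint_lin ?_ m)
    · filter_upwards with ω; simp [Pi.add_apply]; ring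
    · exact hint_η2.const_mul _
  filter_upwards [hadd, hlin, hsq] with ω h1 h2 h3
  rw [h1]
  simp only [Pi.add_apply] at *
  rw [h2]
  linarith

lemma aux_block {Ω : Type*} {m0 : MeasurableSpace Ω} {μ : Measure Ω}
    [IsProbabilityMeasure μ] (ℱ : Filtration ℕ m0)
    (η : ℕ → Ω → ℝ) (σ : ℝ) (hσ : 0 < σ)
    (hmeas : ∀ n, 1 ≤ n → Measurable[ℱ n] (η n))
    (hzero : ∀ n : ℕ, μ[η (n + 1)|ℱ n] =ᵐ[μ] 0)
    (hbd : ∀ n, 1 ≤ n → ∀ᵐ ω ∂μ, |η n ω| ≤ σ)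
    (γ : ℕ → ℝ) (hγ : ∀ n, 1 ≤ n → 0 < γ n)
    (a b : ℕ) (ha : 1 ≤ a) (hab : a ≤ b)
    (θ : ℝ) (hθ : 0 < θ) (hθb : ∀ j, a ≤ j → j < b → θ * γ j * σ ≤ 1)
    (ε' : ℝ) :
    μ {ω | ∃ m, a ≤ m ∧ m ≤ b ∧ ε' < ∑ j ∈ Finset.Ico a m, γ j * η j ω}
      ≤ ENNReal.ofReal (Real.exp (-(θ * ε')) *
          Real.exp (θ ^ 2 * σ ^ 2 * ∑ j ∈ Finset.Ico a b, γ j ^ 2)) := by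
  classical
  -- the exponential process
  set W : ℕ → Ω → ℝ := fun t ω => Real.exp (θ * ∑ j ∈ Finset.Ico a (a + t), γ j * η j ω)
    with hW
  -- the filtration
  set 𝒢 : Filtration ℕ m0 :=
    ⟨fun t => ℱ (a - 1 + t), fun s t hst => ℱ.mono (by omega), fun t => ℱ.le _⟩ with h𝒢
  have h𝒢eq : ∀ t, 𝒢 t = ℱ (a - 1 + t) := fun t => rfl
  -- measurability of the partial sums
  have msum : ∀ t, Measurable[ℱ (a - 1 + t)] (fun ω => ∑ j ∈ Finset.Ico a (a + t), γ j * η j ω) := by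
    intro t
    refine Finset.measurable_sum _ (fun j hj => ?_)
    rw [Finset.mem_Ico] at hj
    exact ((hmeas j (le_trans ha hj.1)).le (ℱ.mono (by omega))).const_mul _
  have hWmeas : ∀ t, Measurable[ℱ (a - 1 + t)] (W t) := by
    intro t
    exact Real.measurable_exp.comp ((msum t).const_mul θ)
  have hWnonneg : ∀ t ω, 0 ≤ W t ω := fun t ω => (Real.exp_pos _).le
  -- a.e. boundedness
  have hbdall : ∀ᵐ ω ∂μ, ∀ n, 1 ≤ n → |η n ω| ≤ σ := by
    rw [ae_all_iff]
    intro n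
    rcases Nat.lt_or_ge n 1 with h | h
    · filter_upwards with ω hn; omega
    · filter_upwards [hbd n h] with ω hω _; exact hω
  have hWbd : ∀ t, ∀ᵐ ω ∂μ, |W t ω| ≤ Real.exp (θ * ∑ j ∈ Finset.Ico a (a + t), γ j * σ) := by
    intro t
    filter_upwards [hbdall] with ω hω
    rw [abs_of_pos (Real.exp_pos _), Real.exp_le_exp]
    refine mul_le_mul_of_nonneg_left (Finset.sum_le_sum fun j hj => ?_) hθ.le
    rw [Finset.mem_Ico] at hj
    have hj1 : 1 ≤ j := le_trans ha hj.1
    exact mul_le_mul_of_nonneg_left ((le_abs_self _).trans (hω j hj1)) (hγ j hj1).le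
  have hWaesm : ∀ t, AEStronglyMeasurable (W t) μ :=
    fun t => (((hWmeas t).le (ℱ.le _)).stronglyMeasurable).aestronglyMeasurable
  have hWint : ∀ t, Integrable (W t) μ := fun t => aux_integrable (hWaesm t) (hWbd t)
  -- increments
  have hWsucc : ∀ t, W (t + 1) = fun ω => W t ω * Real.exp ((θ * γ (a + t)) * η (a + t) ω) := by
    intro t
    funext ω
    have : a + (t + 1) = (a + t) + 1 := rfl
    rw [hW]
    simp only [this, Finset.sum_Ico_succ_top (Nat.le_add_right a t), mul_add, Real.exp_add]
    ring_nf
  have hgmeas : ∀ t, AEStronglyMeasurable (fun ω => Real.exp ((θ * γ (a + t)) * η (a + t) ω)) μ := by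
    intro t
    have h1 : Measurable (η (a + t)) := (hmeas (a + t) (by omega)).le (ℱ.le _)
    exact (Real.measurable_exp.comp (h1.const_mul _)).stronglyMeasurable.aestronglyMeasurable
  have hgbd : ∀ t, ∀ᵐ ω ∂μ, |Real.exp ((θ * γ (a + t)) * η (a + t) ω)|
      ≤ Real.exp (|θ * γ (a + t)| * σ) := by
    intro t
    filter_upwards [hbdall] with ω hω
    rw [abs_of_pos (Real.exp_pos _), Real.exp_le_exp]
    calc (θ * γ (a + t)) * η (a + t) ω ≤ |(θ * γ (a + t)) * η (a + t) ω| := le_abs_self _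
    _ = |θ * γ (a + t)| * |η (a + t) ω| := abs_mul _ _
    _ ≤ |θ * γ (a + t)| * σ := by
        refine mul_le_mul_of_nonneg_left (hω _ (by omega)) (abs_nonneg _)
  have hgint : ∀ t, Integrable (fun ω => Real.exp ((θ * γ (a + t)) * η (a + t) ω)) μ :=
    fun t => aux_integrable (hgmeas t) (hgbd t)
  have hWgint : ∀ t, Integrable (fun ω => W t ω * Real.exp ((θ * γ (a + t)) * η (a + t) ω)) μ := by
    intro t
    refine aux_integrable ((hWaesm t).mul (hgmeas t))
      (C := Real.exp (θ * ∑ j ∈ Finset.Ico a (a + t), γ j * σ) * Real.exp (|θ * γ (a + t)| * σ))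
      ?_
    filter_upwards [hWbd t, hgbd t] with ω h1 h2
    rw [abs_mul]
    exact mul_le_mul h1 h2 (abs_nonneg _) ((abs_nonneg _).trans h1)
  -- conditional expectation of the increment factor is ≥ 1
  have hcond_zero : ∀ t, μ[η (a + t)|ℱ (a - 1 + t)] =ᵐ[μ] 0 := by
    intro t
    have h1 : (a - 1 + t) + 1 = a + t := by omega
    have := hzero (a - 1 + t)
    rwa [h1] at this
  have hone : ∀ t, (fun _ => (1:ℝ)) ≤ᵐ[μ] μ[fun ω => Real.exp ((θ * γ (a + t)) * η (a + t) ω)|ℱ (a - 1 + t)] := by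
    intro t
    have hμη : Integrable (η (a + t)) μ := by
      refine aux_integrable (((hmeas (a + t) (by omega)).le
        (ℱ.le _)).stronglyMeasurable).aestronglyMeasurable (C := σ) ?_
      filter_upwards [hbdall] with ω hω using hω _ (by omega)
    have hlin_int : Integrable (fun ω => 1 + (θ * γ (a + t)) * η (a + t) ω) μ :=
      (integrable_const 1).add (hμη.const_mul _)
    have h2 : μ[fun ω => 1 + (θ * γ (a + t)) * η (a + t) ω|ℱ (a - 1 + t)] =ᵐ[μ] fun _ => 1 := by
      have h1 : (fun ω => (1:ℝ) + (θ * γ (a + t)) * η (a + t) ω)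
          = (fun _ => (1:ℝ)) + fun ω => (θ * γ (a + t)) * η (a + t) ω := by
        funext ω; simp [Pi.add_apply]
      rw [h1]
      refine (condExp_add (integrable_const 1) (hμη.const_mul _) (ℱ (a - 1 + t))).trans ?_
      have h2 : μ[fun ω => (θ * γ (a + t)) * η (a + t) ω|ℱ (a - 1 + t)]
          =ᵐ[μ] (θ * γ (a + t)) • μ[η (a + t)|ℱ (a - 1 + t)] := by
        refine EventuallyEq.trans (condExp_congr_ae ?_)
          (condExp_smul (μ := μ) (m := ℱ (a - 1 + t)) (θ * γ (a + t)) (η (a + t)))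
        filter_upwards with x; simp
      rw [condExp_const (ℱ.le _)]
      filter_upwards [h2, hcond_zero t] with ω h2 hz
      simp only [Pi.add_apply, Pi.smul_apply, smul_eq_mul] at *
      rw [h2, hz]
      simp
    have h3 : (fun ω => 1 + (θ * γ (a + t)) * η (a + t) ω)
        ≤ᵐ[μ] (fun ω => Real.exp ((θ * γ (a + t)) * η (a + t) ω)) := by
      filter_upwards with ω
      have := Real.add_one_le_exp ((θ * γ (a + t)) * η (a + t) ω)
      linarith
    exact h2.symm.le.trans (condExp_mono hlin_int (hgint t) h3)
  -- pull-out
  have hpull : ∀ t, μ[W (t + 1)|ℱ (a - 1 + t)]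
      =ᵐ[μ] fun ω => W t ω * (μ[fun ω' => Real.exp ((θ * γ (a + t)) * η (a + t) ω')|ℱ (a - 1 + t)]) ω := by
    intro t
    have h0 : μ[W (t + 1)|ℱ (a - 1 + t)]
        =ᵐ[μ] μ[fun ω => W t ω * Real.exp ((θ * γ (a + t)) * η (a + t) ω)|ℱ (a - 1 + t)] := by
      rw [hWsucc t]
    refine h0.trans ?_
    have := condExp_mul_of_stronglyMeasurable_left (μ := μ) (m := ℱ (a - 1 + t))
      ((hWmeas t).stronglyMeasurable)
      (by exact hWgint t) (hgint t)
    exact this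
  -- submartingale
  have hsub : Submartingale W 𝒢 μ := by
    refine submartingale_nat (fun t => ((hWmeas t).stronglyMeasurable : StronglyMeasurable[𝒢 t] (W t)))
      hWint (fun t => ?_)
    have h1 := hpull t
    rw [h𝒢eq t]
    refine EventuallyLE.trans ?_ h1.symm.le
    filter_upwards [hone t] with ω hω
    calc W t ω = W t ω * 1 := (mul_one _).symm
    _ ≤ W t ω * _ := mul_le_mul_of_nonneg_left hω (hWnonneg t ω)
  -- moment bound by induction
  have hmom : ∀ t, a + t ≤ b → ∫ ω, W t ω ∂μ
      ≤ ∏ j ∈ Finset.Ico a (a + t), (1 + (θ * γ j) ^ 2 * σ ^ 2) := by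
    intro t
    induction t with
    | zero =>
      intro _
      simp only [Nat.add_zero, Finset.Ico_self, Finset.prod_empty, Finset.sum_empty, hW,
        mul_zero, Real.exp_zero]
      simp
    | succ t ih =>
      intro htb
      have htb' : a + t ≤ b := by omega
      have hj1 : (1:ℕ) ≤ a + t := by omega
      have hc : |θ * γ (a + t)| * σ ≤ 1 := by
        rw [abs_of_pos (mul_pos hθ (hγ _ hj1))]
        exact hθb (a + t) (by omega) (by omega)
      have hηaesm : AEStronglyMeasurable (η (a + t)) μ :=
        (((hmeas (a + t) hj1).le (ℱ.le _)).stronglyMeasurable).aestronglyMeasurable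
      have hcond := aux_condexp_exp_le (ℱ.le (a - 1 + t)) hηaesm hσ.le
        (hbd (a + t) hj1) (hcond_zero t) hc
      have h1 : ∫ ω, W (t + 1) ω ∂μ = ∫ ω, (μ[W (t + 1)|ℱ (a - 1 + t)]) ω ∂μ :=
        (integral_condExp (ℱ.le _)).symm
      have h2 : ∫ ω, (μ[W (t + 1)|ℱ (a - 1 + t)]) ω ∂μ
          ≤ ∫ ω, W t ω * (1 + (θ * γ (a + t)) ^ 2 * σ ^ 2) ∂μ := by
        refine integral_mono_ae integrable_condExp ((hWint t).mul_const _) ?_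
        filter_upwards [hpull t, hcond] with ω hω hω2
        rw [hω]
        exact mul_le_mul_of_nonneg_left hω2 (hWnonneg t ω)
      have h3 : ∫ ω, W t ω * (1 + (θ * γ (a + t)) ^ 2 * σ ^ 2) ∂μ
          = (∫ ω, W t ω ∂μ) * (1 + (θ * γ (a + t)) ^ 2 * σ ^ 2) :=
        integral_mul_const _ _
      have hfac : (0:ℝ) ≤ 1 + (θ * γ (a + t)) ^ 2 * σ ^ 2 := by positivity
      have : a + (t + 1) = (a + t) + 1 := rfl
      rw [this, Finset.prod_Ico_succ_top (Nat.le_add_right a t)]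
      calc ∫ ω, W (t + 1) ω ∂μ ≤ (∫ ω, W t ω ∂μ) * (1 + (θ * γ (a + t)) ^ 2 * σ ^ 2) := by
            rw [h1]; rw [← h3]; exact h2
      _ ≤ (∏ j ∈ Finset.Ico a (a + t), (1 + (θ * γ j) ^ 2 * σ ^ 2))
            * (1 + (θ * γ (a + t)) ^ 2 * σ ^ 2) :=
          mul_le_mul_of_nonneg_right (ih htb') hfac
  -- product bound
  have hprod : ∏ j ∈ Finset.Ico a b, (1 + (θ * γ j) ^ 2 * σ ^ 2)
      ≤ Real.exp (θ ^ 2 * σ ^ 2 * ∑ j ∈ Finset.Ico a b, γ j ^ 2) := by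
    calc ∏ j ∈ Finset.Ico a b, (1 + (θ * γ j) ^ 2 * σ ^ 2)
        ≤ ∏ j ∈ Finset.Ico a b, Real.exp ((θ * γ j) ^ 2 * σ ^ 2) := by
          refine Finset.prod_le_prod (fun j _ => by positivity) (fun j _ => ?_)
          have := Real.add_one_le_exp ((θ * γ j) ^ 2 * σ ^ 2)
          linarith
    _ = Real.exp (∑ j ∈ Finset.Ico a b, (θ * γ j) ^ 2 * σ ^ 2) := (Real.exp_sum _ _).symm
    _ = Real.exp (θ ^ 2 * σ ^ 2 * ∑ j ∈ Finset.Ico a b, γ j ^ 2) := by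
        congr 1
        rw [Finset.mul_sum]
        exact Finset.sum_congr rfl fun j _ => by ring
  -- Doob's maximal inequality
  set L := b - a with hL
  have haL : a + L = b := by omega
  set c0 : ℝ≥0 := (Real.exp (θ * ε')).toNNReal with hc0
  have hc0coe : (c0 : ℝ) = Real.exp (θ * ε') := Real.coe_toNNReal _ (Real.exp_pos _).le
  set S := {ω | (c0 : ℝ) ≤ (Finset.range (L + 1)).sup' Finset.nonempty_range_add_one
    fun k => W k ω} with hS
  have hincl : {ω | ∃ m, a ≤ m ∧ m ≤ b ∧ ε' < ∑ j ∈ Finset.Ico a m, γ j * η j ω} ⊆ S := by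
    rintro ω ⟨m, ham, hmb, hε⟩
    have ht : a + (m - a) = m := by omega
    have htL : m - a ∈ Finset.range (L + 1) := by
      rw [Finset.mem_range]; omega
    have h1 : (c0 : ℝ) ≤ W (m - a) ω := by
      rw [hc0coe, hW]
      simp only [ht]
      exact (Real.exp_le_exp.2 (mul_le_mul_of_nonneg_left hε.le hθ.le))
    exact le_trans h1 (Finset.le_sup' (f := fun k => W k ω) htL)
  have hWpos : (0 : ℕ → Ω → ℝ) ≤ W := fun t ω => hWnonneg t ω
  have hdoob := maximal_ineq hsub hWpos (ε := c0) (n := L)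
  have hset : ∫ ω in S, W L ω ∂μ ≤ ∫ ω, W L ω ∂μ :=
    setIntegral_le_integral (hWint L) (Filter.Eventually.of_forall fun ω => hWnonneg L ω)
  have hWLbd : ∫ ω, W L ω ∂μ ≤ Real.exp (θ ^ 2 * σ ^ 2 * ∑ j ∈ Finset.Ico a b, γ j ^ 2) := by
    refine le_trans ?_ hprod
    have := hmom L (by omega)
    rwa [haL] at this
  have hc0ne : (c0 : ℝ≥0∞) ≠ 0 := by
    simp only [ne_eq, ENNReal.coe_eq_zero]
    exact ne_of_gt (Real.toNNReal_pos.2 (Real.exp_pos _))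
  have hc0top : (c0 : ℝ≥0∞) ≠ ⊤ := ENNReal.coe_ne_top
  have hμS : μ S ≤ (c0 : ℝ≥0∞)⁻¹ *
      ENNReal.ofReal (Real.exp (θ ^ 2 * σ ^ 2 * ∑ j ∈ Finset.Ico a b, γ j ^ 2)) := by
    have h1 : (c0 : ℝ≥0∞) * μ S ≤
        ENNReal.ofReal (Real.exp (θ ^ 2 * σ ^ 2 * ∑ j ∈ Finset.Ico a b, γ j ^ 2)) := by
      exact le_trans hdoob (ENNReal.ofReal_le_ofReal (le_trans hset hWLbd))
    calc μ S = (c0 : ℝ≥0∞)⁻¹ * ((c0 : ℝ≥0∞) * μ S) := by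
          rw [← mul_assoc, ENNReal.inv_mul_cancel hc0ne hc0top, one_mul]
    _ ≤ _ := mul_le_mul_right h1 _
  calc μ {ω | ∃ m, a ≤ m ∧ m ≤ b ∧ ε' < ∑ j ∈ Finset.Ico a m, γ j * η j ω}
      ≤ μ S := measure_mono hincl
  _ ≤ (c0 : ℝ≥0∞)⁻¹ *
      ENNReal.ofReal (Real.exp (θ ^ 2 * σ ^ 2 * ∑ j ∈ Finset.Ico a b, γ j ^ 2)) := hμS
  _ = ENNReal.ofReal (Real.exp (-(θ * ε')) *
      Real.exp (θ ^ 2 * σ ^ 2 * ∑ j ∈ Finset.Ico a b, γ j ^ 2)) := by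
      have h1 : (c0 : ℝ≥0∞) = ENNReal.ofReal (Real.exp (θ * ε')) := rfl
      rw [h1, ← ENNReal.ofReal_inv_of_pos (Real.exp_pos _),
        ← ENNReal.ofReal_mul (by positivity), ← Real.exp_neg]

lemma aux_sum_blocks (f : ℕ → ℝ) (c : ℕ → ℕ) (hc : ∀ k, c k ≤ c (k + 1)) :
    ∀ K, ∑ k ∈ Finset.range K, ∑ j ∈ Finset.Ico (c k) (c (k + 1)), f j
      = ∑ j ∈ Finset.Ico (c 0) (c K), f j := by
  have hmono : Monotone c := monotone_nat_of_le_succ hc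
  intro K
  induction K with
  | zero => simp
  | succ K ih =>
    rw [Finset.sum_range_succ, ih]
    exact Finset.sum_Ico_consecutive f (hmono (Nat.zero_le K)) (hc K)


set_option maxHeartbeats 1000000 in
/-- Probabilistic core of Theorem B.1: under the paper's step-size assumption,
the accumulated weighted noise over every time window of effective length at
most `T` vanishes almost surely. -/
theorem stmt_7
    {Ω : Type*} {m0 : MeasurableSpace Ω} {μ : Measure Ω} [IsProbabilityMeasure μ]
    (ℱ : Filtration ℕ m0) {d : ℕ}
    (ξ : ℕ → Ω → EuclideanSpace ℝ (Fin d)) (σ : ℝ)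
    (hmeas : ∀ n, 1 ≤ n → Measurable[ℱ n] (ξ n))
    (hmean : ∀ n : ℕ, μ[ξ (n + 1) | ℱ n] =ᵐ[μ] 0)
    (hbdd : ∀ n, 1 ≤ n → ∀ᵐ ω ∂μ, ‖ξ n ω‖ ≤ σ)
    (γ : ℕ → ℝ) (hγ : ∀ n, 1 ≤ n → γ n ∈ Set.Ioc (0 : ℝ) 1)
    (hγdiv : ¬ Summable γ)
    (hγsum : ∀ l : ℝ, l ∈ Set.Ioo (0 : ℝ) 1 → Summable (fun n => l ^ (1 / γ n)))
    (τ : ℕ → ℝ) (hτ : ∀ n, τ n = ∑ j ∈ Finset.Ico 1 n, γ j)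
    (T : ℝ) (hT : 0 < T) :
    ∀ᵐ ω ∂μ, Tendsto
      (fun n => sSup {x : ℝ | ∃ m, n ≤ m ∧ τ m - τ n ≤ T ∧
        x = ‖∑ j ∈ Finset.Ico n m, γ j • ξ j ω‖})
      atTop (𝓝 0) := by
  classical
  have hσ0 : 0 ≤ σ := by
    obtain ⟨ω, hω⟩ := (hbdd 1 le_rfl).exists
    exact (norm_nonneg _).trans hω
  have hγpos : ∀ n, 1 ≤ n → 0 < γ n := fun n hn => (hγ n hn).1
  have hτdiff : ∀ a b : ℕ, 1 ≤ a → a ≤ b → τ b - τ a = ∑ j ∈ Finset.Ico a b, γ j := by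
    intro a b ha hab
    rw [hτ, hτ, ← Finset.sum_Ico_consecutive γ ha hab]
    ring
  have hτmono : ∀ a b : ℕ, 1 ≤ a → a ≤ b → τ a ≤ τ b := by
    intro a b ha hab
    have h1 := hτdiff a b ha hab
    have h2 : 0 ≤ ∑ j ∈ Finset.Ico a b, γ j :=
      Finset.sum_nonneg fun j hj => (hγpos j (le_trans ha (Finset.mem_Ico.1 hj).1)).le
    linarith
  -- τ tends to infinity
  have hns : ¬ Summable (fun i : ℕ => γ (1 + i)) := by
    intro h
    exact hγdiv ((summable_nat_add_iff 1).1 (by simpa [Nat.add_comm] using h))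
  have htend : Tendsto (fun n => ∑ i ∈ Finset.range n, γ (1 + i)) atTop atTop :=
    (not_summable_iff_tendsto_nat_atTop_of_nonneg
      (fun i => (hγpos (1 + i) (by omega)).le)).1 hns
  have hτtop : Tendsto τ atTop atTop := by
    have h1 : τ = (fun n => ∑ i ∈ Finset.range n, γ (1 + i)) ∘ (fun n => n - 1) := by
      funext n
      simp only [Function.comp_apply]
      rw [hτ n, Finset.sum_Ico_eq_sum_range]
    rw [h1]
    exact htend.comp (tendsto_sub_atTop_nat 1)
  -- block boundaries
  have hex : ∀ n : ℕ, ∃ m, n < m ∧ T < τ m - τ n := by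
    intro n
    obtain ⟨M, hM⟩ := eventually_atTop.1 (tendsto_atTop.1 hτtop (τ n + T + 1))
    refine ⟨max M (n + 1), by omega, ?_⟩
    have := hM (max M (n + 1)) (le_max_left _ _)
    linarith
  set F : ℕ → ℕ := fun n => Nat.find (hex n) with hF
  have hFspec : ∀ n, n < F n ∧ T < τ (F n) - τ n := fun n => Nat.find_spec (hex n)
  have hFmin : ∀ n m, m < F n → ¬(n < m ∧ T < τ m - τ n) := fun n m h => Nat.find_min (hex n) h
  set N : ℕ → ℕ := fun k => F^[k] 1 with hN
  have hN0 : N 0 = 1 := rfl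
  have hNsucc : ∀ k, N (k + 1) = F (N k) := fun k => Function.iterate_succ_apply' F k 1
  have hNlt : ∀ k, N k < N (k + 1) := fun k => by rw [hNsucc]; exact (hFspec (N k)).1
  have hNstrict : StrictMono N := strictMono_nat_of_lt_succ hNlt
  have hN1 : ∀ k, 1 ≤ N k := by
    intro k
    induction k with
    | zero => exact le_rfl
    | succ k ih => exact le_trans ih (hNlt k).le
  have hgap : ∀ k, T < τ (N (k + 1)) - τ (N k) := fun k => by
    rw [hNsucc]; exact (hFspec (N k)).2
  have hgap2 : ∀ k, τ (N (k + 1)) - τ (N k) ≤ T + 1 := by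
    intro k
    rw [hNsucc]
    set n := N k with hn
    have hn1 : 1 ≤ n := hN1 k
    have hstep : ∀ j, 1 ≤ j → τ (j + 1) - τ j = γ j := by
      intro j hj
      rw [hτdiff j (j + 1) hj (by omega)]
      rw [Finset.sum_Ico_succ_top le_rfl, Finset.Ico_self, Finset.sum_empty, zero_add]
    by_cases hc : F n = n + 1
    · rw [hc, hstep n hn1]
      have := (hγ n hn1).2
      linarith
    · have h1 : n < F n - 1 := by have := (hFspec n).1; omega
      have h2 := hFmin n (F n - 1) (by omega)
      push_neg at h2
      have h3 : τ (F n - 1) - τ n ≤ T := h2 h1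
      have h4 : τ (F n - 1 + 1) - τ (F n - 1) = γ (F n - 1) := hstep _ (by omega)
      have h5 : F n - 1 + 1 = F n := by omega
      rw [h5] at h4
      have h6 := (hγ (F n - 1) (by omega)).2
      linarith
  have hcover : ∀ n, 1 ≤ n → ∃ k, N k ≤ n ∧ n < N (k + 1) := by
    intro n hn
    have hNk : ∀ k, k ≤ N k := fun k => hNstrict.le_apply
    set k := Nat.findGreatest (fun k => N k ≤ n) n with hk
    have hk1 : N k ≤ n := Nat.findGreatest_spec (P := fun k => N k ≤ n) (m := 0)
      (Nat.zero_le n) (by simpa [hN0] using hn)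
    refine ⟨k, hk1, ?_⟩
    by_contra h
    push_neg at h
    have hk1' : k + 1 ≤ n := le_trans (hNk (k + 1)) h
    have := Nat.le_findGreatest (P := fun k => N k ≤ n) hk1' h
    omega
  -- the set always contains 0 and all elements are nonnegative
  have hzero_mem : ∀ (ω : Ω) (n : ℕ), (0:ℝ) ∈ {x : ℝ | ∃ m, n ≤ m ∧ τ m - τ n ≤ T ∧
      x = ‖∑ j ∈ Finset.Ico n m, γ j • ξ j ω‖} := by
    intro ω n
    exact ⟨n, le_rfl, by simp [hT.le], by simp⟩
  rcases eq_or_lt_of_le hσ0 with hσz | hσpos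
  · -- degenerate case σ = 0
    have hz : ∀ᵐ ω ∂μ, ∀ j, 1 ≤ j → ξ j ω = 0 := by
      rw [ae_all_iff]
      intro j
      rcases Nat.lt_or_ge j 1 with h | h
      · filter_upwards with ω hj; omega
      · filter_upwards [hbdd j h] with ω hω _
        rw [← norm_le_zero_iff]
        rw [← hσz] at hω
        exact hω
    filter_upwards [hz] with ω hω
    refine Tendsto.congr' ?_ (tendsto_const_nhds (x := (0:ℝ)))
    rw [EventuallyEq, eventually_atTop]
    refine ⟨1, fun n hn => ?_⟩
    have hset : {x : ℝ | ∃ m, n ≤ m ∧ τ m - τ n ≤ T ∧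
        x = ‖∑ j ∈ Finset.Ico n m, γ j • ξ j ω‖} = {0} := by
      ext x
      constructor
      · rintro ⟨m, hm, hmT, rfl⟩
        have : ∑ j ∈ Finset.Ico n m, γ j • ξ j ω = 0 := by
          refine Finset.sum_eq_zero fun j hj => ?_
          rw [hω j (le_trans hn (Finset.mem_Ico.1 hj).1), smul_zero]
        simp [this]
      · rintro rfl
        exact hzero_mem ω n
    rw [hset, csSup_singleton]
  -- main case : σ > 0
  have KEY : ∀ ε : ℝ, 0 < ε → ∀ᵐ ω ∂μ, ∀ᶠ n in atTop,
      ∀ m, n ≤ m → τ m - τ n ≤ T → ‖∑ j ∈ Finset.Ico n m, γ j • ξ j ω‖ ≤ ε := by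
    intro ε hε
    -- constants
    set ε' : ℝ := ε / (2 * ((d:ℝ) + 1)) with hε'def
    have hε'pos : 0 < ε' := by positivity
    set T₂ : ℝ := 2 * T + 2 with hT₂def
    have hT₂pos : 0 < T₂ := by rw [hT₂def]; linarith
    set a₀ : ℝ := min (ε' / (2 * σ ^ 2 * T₂)) (1 / σ) with ha₀def
    have ha₀pos : 0 < a₀ := lt_min (by positivity) (by positivity)
    have ha₀1 : a₀ * σ ≤ 1 := by
      have h1 : a₀ ≤ 1 / σ := min_le_right _ _
      calc a₀ * σ ≤ (1 / σ) * σ := mul_le_mul_of_nonneg_right h1 hσ0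
      _ = 1 := by field_simp
    have ha₀2 : a₀ * (σ ^ 2 * T₂) ≤ ε' / 2 := by
      have h1 : a₀ ≤ ε' / (2 * σ ^ 2 * T₂) := min_le_left _ _
      have h2 : (0:ℝ) < σ ^ 2 * T₂ := by positivity
      calc a₀ * (σ ^ 2 * T₂) ≤ (ε' / (2 * σ ^ 2 * T₂)) * (σ ^ 2 * T₂) :=
            mul_le_mul_of_nonneg_right h1 h2.le
      _ = ε' / 2 := by field_simp
    set lam0 : ℝ := Real.exp (-(a₀ * ε' / 2)) with hlam0def
    have hlam0mem : lam0 ∈ Set.Ioo (0:ℝ) 1 := by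
      constructor
      · exact Real.exp_pos _
      · rw [hlam0def, Real.exp_lt_one_iff]
        nlinarith
    -- blocks
    have hIcoNe : ∀ k : ℕ, (Finset.Ico (N k) (N (k + 2))).Nonempty := fun k =>
      ⟨N k, Finset.mem_Ico.2 ⟨le_rfl, lt_trans (hNlt k) (hNlt (k + 1))⟩⟩
    set G : ℕ → ℝ := fun k => (Finset.Ico (N k) (N (k + 2))).sup' (hIcoNe k) γ with hGdef
    have hGub : ∀ k, ∀ j ∈ Finset.Ico (N k) (N (k + 2)), γ j ≤ G k :=
      fun k j hj => Finset.le_sup' γ hj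
    have hGmem : ∀ k, ∃ j, j ∈ Finset.Ico (N k) (N (k + 2)) ∧ G k = γ j := fun k =>
      Finset.exists_mem_eq_sup' (hIcoNe k) γ
    have hGpos : ∀ k, 0 < G k := by
      intro k
      obtain ⟨j, hj, hG⟩ := hGmem k
      rw [hG]
      exact hγpos j (le_trans (hN1 k) (Finset.mem_Ico.1 hj).1)
    set θ : ℕ → ℝ := fun k => a₀ / G k with hθdef
    have hθpos : ∀ k, 0 < θ k := fun k => div_pos ha₀pos (hGpos k)
    -- coordinate processes
    set η : Fin d × Bool → ℕ → Ω → ℝ :=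
      fun p n ω => (if p.2 then (1:ℝ) else -1) * (ξ n ω p.1) with hηdef
    have hcmul : ∀ p : Fin d × Bool, |(if p.2 then (1:ℝ) else -1)| = 1 := by
      intro p; rcases p.2 <;> simp
    have hηmeas : ∀ p, ∀ n, 1 ≤ n → Measurable[ℱ n] (η p n) := by
      intro p n hn
      have h1 : Measurable[ℱ n] (fun ω => ξ n ω p.1) :=
        ((EuclideanSpace.proj (𝕜 := ℝ) p.1).continuous.measurable).comp (hmeas n hn)
      exact h1.const_mul _
    have hint : ∀ n, 1 ≤ n → Integrable (ξ n) μ := by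
      intro n hn
      refine (integrable_const σ).mono'
        (((hmeas n hn).le (ℱ.le n)).stronglyMeasurable).aestronglyMeasurable ?_
      filter_upwards [hbdd n hn] with ω hω using hω
    have hηzero : ∀ p, ∀ n : ℕ, μ[η p (n + 1)|ℱ n] =ᵐ[μ] 0 := by
      intro p n
      have hL := aux_condexp_clm_zero (ℱ.le n)
        ((if p.2 then (1:ℝ) else -1) • (EuclideanSpace.proj (𝕜 := ℝ) p.1))
        (hint (n + 1) (by omega)) (hmean n)
      refine EventuallyEq.trans (condExp_congr_ae ?_) hL
      filter_upwards with ω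
      rcases hb : p.2 <;>
        simp [hηdef, hb, ContinuousLinearMap.smul_apply, ContinuousLinearMap.neg_apply]
    have hηbd : ∀ p, ∀ n, 1 ≤ n → ∀ᵐ ω ∂μ, |η p n ω| ≤ σ := by
      intro p n hn
      filter_upwards [hbdd n hn] with ω hω
      rw [hηdef]
      calc |(if p.2 then (1:ℝ) else -1) * (ξ n ω p.1)|
          = |(if p.2 then (1:ℝ) else -1)| * |ξ n ω p.1| := abs_mul _ _
      _ = |ξ n ω p.1| := by rw [hcmul p, one_mul]
      _ ≤ ‖ξ n ω‖ := aux_coord_le_norm _ _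
      _ ≤ σ := hω
    -- events
    set Ev : ℕ → Set Ω := fun k => ⋃ p : Fin d × Bool,
      {ω | ∃ m, N k ≤ m ∧ m ≤ N (k + 2) ∧
        ε' < ∑ j ∈ Finset.Ico (N k) m, γ j * η p j ω} with hEvdef
    -- sum of the steps over a double block
    have hτblock : ∀ k, ∑ j ∈ Finset.Ico (N k) (N (k + 2)), γ j ≤ T₂ := by
      intro k
      have h1 := hgap2 k
      have h2 := hgap2 (k + 1)
      have e1 := hτdiff (N k) (N (k + 1)) (hN1 k) (hNlt k).le
      have e2 := hτdiff (N (k + 1)) (N (k + 2)) (hN1 (k + 1)) (hNlt (k + 1)).le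
      have e3 : ∑ j ∈ Finset.Ico (N k) (N (k + 1)), γ j
          + ∑ j ∈ Finset.Ico (N (k + 1)) (N (k + 2)), γ j
          = ∑ j ∈ Finset.Ico (N k) (N (k + 2)), γ j :=
        Finset.sum_Ico_consecutive γ (hNlt k).le (hNlt (k + 1)).le
      rw [hT₂def]
      linarith
    have hsq : ∀ k, ∑ j ∈ Finset.Ico (N k) (N (k + 2)), γ j ^ 2 ≤ G k * T₂ := by
      intro k
      calc ∑ j ∈ Finset.Ico (N k) (N (k + 2)), γ j ^ 2
          ≤ ∑ j ∈ Finset.Ico (N k) (N (k + 2)), G k * γ j := by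
            refine Finset.sum_le_sum fun j hj => ?_
            have h1 := hGub k j hj
            have h2 := (hγpos j (le_trans (hN1 k) (Finset.mem_Ico.1 hj).1)).le
            nlinarith
      _ = G k * ∑ j ∈ Finset.Ico (N k) (N (k + 2)), γ j := (Finset.mul_sum _ _ _).symm
      _ ≤ G k * T₂ := mul_le_mul_of_nonneg_left (hτblock k) (hGpos k).le
    -- the probability bound for each event
    have hEvbd : ∀ k, μ (Ev k) ≤
        ((2 * d : ℕ) : ℝ≥0∞) * ENNReal.ofReal (lam0 ^ (1 / G k)) := by
      intro k
      have hexp : Real.exp (-(θ k * ε')) *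
          Real.exp ((θ k) ^ 2 * σ ^ 2 * ∑ j ∈ Finset.Ico (N k) (N (k + 2)), γ j ^ 2)
          ≤ lam0 ^ (1 / G k) := by
        rw [← Real.exp_add]
        have hrw : lam0 ^ (1 / G k) = Real.exp (-(a₀ * ε' / 2) * (1 / G k)) := by
          rw [hlam0def, Real.exp_mul]
        rw [hrw, Real.exp_le_exp]
        have hS2 := hsq k
        have hG := hGpos k
        have hθval : θ k = a₀ / G k := rfl
        have hS2nn : 0 ≤ ∑ j ∈ Finset.Ico (N k) (N (k + 2)), γ j ^ 2 :=
          Finset.sum_nonneg fun j _ => sq_nonneg _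
        have hkey : (θ k) ^ 2 * σ ^ 2 * ∑ j ∈ Finset.Ico (N k) (N (k + 2)), γ j ^ 2
            ≤ (a₀ / G k) * (ε' / 2) := by
          calc (θ k) ^ 2 * σ ^ 2 * ∑ j ∈ Finset.Ico (N k) (N (k + 2)), γ j ^ 2
              ≤ (θ k) ^ 2 * σ ^ 2 * (G k * T₂) := by
                refine mul_le_mul_of_nonneg_left hS2 (by positivity)
          _ = (a₀ / G k) * (a₀ * (σ ^ 2 * T₂)) := by
              rw [hθval]; field_simp
          _ ≤ (a₀ / G k) * (ε' / 2) := by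
              refine mul_le_mul_of_nonneg_left ha₀2 (by positivity)
        have heq : -(a₀ * ε' / 2) * (1 / G k) = -((a₀ / G k) * ε') + (a₀ / G k) * (ε' / 2) := by
          field_simp
          ring
        rw [heq, hθval]
        linarith
      have hone : ∀ p : Fin d × Bool,
          μ {ω | ∃ m, N k ≤ m ∧ m ≤ N (k + 2) ∧
            ε' < ∑ j ∈ Finset.Ico (N k) m, γ j * η p j ω}
          ≤ ENNReal.ofReal (lam0 ^ (1 / G k)) := by
        intro p
        have hblock := aux_block ℱ (η p) σ hσpos (hηmeas p) (hηzero p) (hηbd p) γ hγpos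
          (N k) (N (k + 2)) (hN1 k) (le_of_lt (lt_trans (hNlt k) (hNlt (k + 1))))
          (θ k) (hθpos k) (fun j hj1 hj2 => ?_) ε'
        · refine le_trans hblock (ENNReal.ofReal_le_ofReal hexp)
        · have hjm : j ∈ Finset.Ico (N k) (N (k + 2)) := Finset.mem_Ico.2 ⟨hj1, hj2⟩
          have h1 : θ k * γ j ≤ a₀ := by
            rw [hθdef]
            rw [div_mul_eq_mul_div, div_le_iff₀ (hGpos k)]
            exact mul_le_mul_of_nonneg_left (hGub k j hjm) ha₀pos.le
          calc θ k * γ j * σ ≤ a₀ * σ := mul_le_mul_of_nonneg_right h1 hσ0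
          _ ≤ 1 := ha₀1
      calc μ (Ev k) ≤ ∑ p : Fin d × Bool, μ {ω | ∃ m, N k ≤ m ∧ m ≤ N (k + 2) ∧
            ε' < ∑ j ∈ Finset.Ico (N k) m, γ j * η p j ω} := by
            rw [hEvdef]
            exact measure_iUnion_fintype_le μ _
      _ ≤ ∑ _p : Fin d × Bool, ENNReal.ofReal (lam0 ^ (1 / G k)) :=
          Finset.sum_le_sum fun p _ => hone p
      _ = ((2 * d : ℕ) : ℝ≥0∞) * ENNReal.ofReal (lam0 ^ (1 / G k)) := by
          rw [Finset.sum_const, nsmul_eq_mul]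
          congr 1
          simp [Fintype.card_prod, mul_comm]
    -- summability
    have hsummable : Summable (fun k => lam0 ^ (1 / G k)) := by
      have hhsum : Summable (fun j => lam0 ^ (1 / γ j)) := hγsum lam0 hlam0mem
      have hhnn : ∀ j : ℕ, 0 ≤ lam0 ^ (1 / γ j) := fun j => Real.rpow_nonneg hlam0mem.1.le _
      have hbound : ∀ k, lam0 ^ (1 / G k) ≤ ∑ j ∈ Finset.Ico (N k) (N (k + 2)), lam0 ^ (1 / γ j) := by
        intro k
        obtain ⟨j, hj, hG⟩ := hGmem k
        have h1 : lam0 ^ (1 / G k) = lam0 ^ (1 / γ j) := by rw [hG]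
        rw [h1]
        exact Finset.single_le_sum (fun j _ => hhnn j) hj
      refine summable_of_sum_range_le (c := 2 * ∑' j, lam0 ^ (1 / γ j))
        (fun k => Real.rpow_nonneg hlam0mem.1.le _) (fun K => ?_)
      have hu1 : ∑ k ∈ Finset.range K, ∑ j ∈ Finset.Ico (N k) (N (k + 1)), lam0 ^ (1 / γ j)
          = ∑ j ∈ Finset.Ico (N 0) (N K), lam0 ^ (1 / γ j) :=
        aux_sum_blocks _ N (fun k => (hNlt k).le) K
      have hu2 : ∑ k ∈ Finset.range K, ∑ j ∈ Finset.Ico (N (k + 1)) (N (k + 2)), lam0 ^ (1 / γ j)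
          = ∑ j ∈ Finset.Ico (N 1) (N (K + 1)), lam0 ^ (1 / γ j) :=
        aux_sum_blocks _ (fun k => N (k + 1)) (fun k => (hNlt (k + 1)).le) K
      calc ∑ k ∈ Finset.range K, lam0 ^ (1 / G k)
          ≤ ∑ k ∈ Finset.range K, ∑ j ∈ Finset.Ico (N k) (N (k + 2)), lam0 ^ (1 / γ j) :=
            Finset.sum_le_sum fun k _ => hbound k
      _ = ∑ k ∈ Finset.range K, (∑ j ∈ Finset.Ico (N k) (N (k + 1)), lam0 ^ (1 / γ j)
            + ∑ j ∈ Finset.Ico (N (k + 1)) (N (k + 2)), lam0 ^ (1 / γ j)) := by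
          refine Finset.sum_congr rfl fun k _ => ?_
          rw [Finset.sum_Ico_consecutive _ (hNlt k).le (hNlt (k + 1)).le]
      _ = (∑ k ∈ Finset.range K, ∑ j ∈ Finset.Ico (N k) (N (k + 1)), lam0 ^ (1 / γ j))
            + ∑ k ∈ Finset.range K, ∑ j ∈ Finset.Ico (N (k + 1)) (N (k + 2)), lam0 ^ (1 / γ j) :=
          Finset.sum_add_distrib
      _ ≤ (∑' j, lam0 ^ (1 / γ j)) + (∑' j, lam0 ^ (1 / γ j)) := by
          refine add_le_add ?_ ?_
          · rw [hu1]
            exact Summable.sum_le_tsum _ (fun j _ => hhnn j) hhsum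
          · rw [hu2]
            exact Summable.sum_le_tsum _ (fun j _ => hhnn j) hhsum
      _ = 2 * ∑' j, lam0 ^ (1 / γ j) := by ring
    -- Borel–Cantelli
    have htsum : (∑' k, μ (Ev k)) ≠ ⊤ := by
      have h1 : ∑' k, μ (Ev k)
          ≤ ∑' k, ((2 * d : ℕ) : ℝ≥0∞) * ENNReal.ofReal (lam0 ^ (1 / G k)) :=
        ENNReal.tsum_le_tsum hEvbd
      rw [ENNReal.tsum_mul_left] at h1
      have h2 : ∑' k, ENNReal.ofReal (lam0 ^ (1 / G k))
          = ENNReal.ofReal (∑' k, lam0 ^ (1 / G k)) :=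
        (ENNReal.ofReal_tsum_of_nonneg (fun k => Real.rpow_nonneg hlam0mem.1.le _) hsummable).symm
      rw [h2] at h1
      exact ne_top_of_le_ne_top (ENNReal.mul_ne_top (ENNReal.natCast_ne_top _) ENNReal.ofReal_ne_top) h1
    have hBC := ae_eventually_notMem htsum
    have hbdall : ∀ᵐ ω ∂μ, ∀ n, 1 ≤ n → ‖ξ n ω‖ ≤ σ := by
      rw [ae_all_iff]
      intro n
      rcases Nat.lt_or_ge n 1 with h | h
      · filter_upwards with ω hn; omega
      · filter_upwards [hbdd n h] with ω hω _; exact hω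
    filter_upwards [hBC, hbdall] with ω hω1 hω2
    obtain ⟨K, hK⟩ := eventually_atTop.1 hω1
    rw [eventually_atTop]
    refine ⟨N K, fun n hn m hnm hτT => ?_⟩
    have hn1 : 1 ≤ n := le_trans (hN1 K) hn
    obtain ⟨k, hk1, hk2⟩ := hcover n hn1
    have hkK : K ≤ k := by
      by_contra h
      push_neg at h
      have := hNstrict.monotone (show k + 1 ≤ K from h)
      omega
    have hmb : m ≤ N (k + 2) := by
      by_contra h
      push_neg at h
      have h1 : τ (N (k + 2)) ≤ τ m := hτmono _ _ (hN1 _) h.le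
      have h2 : τ n ≤ τ (N (k + 1)) := hτmono n _ hn1 hk2.le
      have h3 := hgap (k + 1)
      linarith
    have hnotin := hK k hkK
    have hnot : ∀ p : Fin d × Bool, ∀ m', N k ≤ m' → m' ≤ N (k + 2) →
        ∑ j ∈ Finset.Ico (N k) m', γ j * η p j ω ≤ ε' := by
      intro p m' h1 h2
      by_contra h
      push_neg at h
      exact hnotin (Set.mem_iUnion.2 ⟨p, ⟨m', h1, h2, h⟩⟩)
    have hcoord : ∀ (i : Fin d) (m' : ℕ), N k ≤ m' → m' ≤ N (k + 2) →
        |∑ j ∈ Finset.Ico (N k) m', γ j * (ξ j ω i)| ≤ ε' := by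
      intro i m' h1 h2
      rw [abs_le]
      constructor
      · have hfa := hnot (i, false) m' h1 h2
        have hneg : ∑ j ∈ Finset.Ico (N k) m', γ j * η (i, false) j ω
            = -∑ j ∈ Finset.Ico (N k) m', γ j * (ξ j ω i) := by
          rw [← Finset.sum_neg_distrib]
          refine Finset.sum_congr rfl fun j _ => ?_
          simp [hηdef]
        rw [hneg] at hfa
        linarith
      · have hta := hnot (i, true) m' h1 h2
        have heq : ∑ j ∈ Finset.Ico (N k) m', γ j * η (i, true) j ω
            = ∑ j ∈ Finset.Ico (N k) m', γ j * (ξ j ω i) := by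
          refine Finset.sum_congr rfl fun j _ => ?_
          simp [hηdef]
        rw [heq] at hta
        exact hta
    have hki : ∀ i : Fin d, |∑ j ∈ Finset.Ico n m, γ j * (ξ j ω i)| ≤ 2 * ε' := by
      intro i
      have hsplit : ∑ j ∈ Finset.Ico (N k) n, γ j * (ξ j ω i)
          + ∑ j ∈ Finset.Ico n m, γ j * (ξ j ω i)
          = ∑ j ∈ Finset.Ico (N k) m, γ j * (ξ j ω i) :=
        Finset.sum_Ico_consecutive _ hk1 hnm
      have h1 := hcoord i n hk1 (le_trans hk2.le (hNstrict.monotone (by omega)))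
      have h2 := hcoord i m (le_trans hk1 hnm) hmb
      have h3 : ∑ j ∈ Finset.Ico n m, γ j * (ξ j ω i)
          = ∑ j ∈ Finset.Ico (N k) m, γ j * (ξ j ω i)
            - ∑ j ∈ Finset.Ico (N k) n, γ j * (ξ j ω i) := by linarith
      rw [h3]
      calc |∑ j ∈ Finset.Ico (N k) m, γ j * (ξ j ω i)
            - ∑ j ∈ Finset.Ico (N k) n, γ j * (ξ j ω i)|
          ≤ |∑ j ∈ Finset.Ico (N k) m, γ j * (ξ j ω i)|
            + |∑ j ∈ Finset.Ico (N k) n, γ j * (ξ j ω i)| := abs_sub _ _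
      _ ≤ 2 * ε' := by linarith
    have hv : ∀ i : Fin d, (∑ j ∈ Finset.Ico n m, γ j • ξ j ω) i
        = ∑ j ∈ Finset.Ico n m, γ j * (ξ j ω i) := by
      intro i
      have hmap := map_sum (EuclideanSpace.proj (𝕜 := ℝ) i)
        (fun j => γ j • ξ j ω) (Finset.Ico n m)
      rw [show ((∑ j ∈ Finset.Ico n m, γ j • ξ j ω) i)
          = (EuclideanSpace.proj (𝕜 := ℝ) i) (∑ j ∈ Finset.Ico n m, γ j • ξ j ω) from rfl, hmap]
      refine Finset.sum_congr rfl fun j _ => ?_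
      simp [smul_eq_mul]
    calc ‖∑ j ∈ Finset.Ico n m, γ j • ξ j ω‖
        ≤ ∑ i, |(∑ j ∈ Finset.Ico n m, γ j • ξ j ω) i| :=
          aux_norm_le_sum (∑ j ∈ Finset.Ico n m, γ j • ξ j ω)
    _ ≤ ∑ _i : Fin d, 2 * ε' := Finset.sum_le_sum fun i _ => by rw [hv i]; exact hki i
    _ = (d : ℝ) * (2 * ε') := by
        rw [Finset.sum_const, nsmul_eq_mul, Finset.card_univ, Fintype.card_fin]
    _ ≤ ε := by
        rw [hε'def]
        have hd1 : (0:ℝ) < (d:ℝ) + 1 := by positivity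
        have heq : (d:ℝ) * (2 * (ε / (2 * ((d:ℝ) + 1)))) = ((d:ℝ) / ((d:ℝ) + 1)) * ε := by
          field_simp
        rw [heq]
        have hle : (d:ℝ) / ((d:ℝ) + 1) ≤ 1 := by
          rw [div_le_one hd1]
          linarith
        nlinarith [Nat.cast_nonneg (α := ℝ) d]
  have KEYall : ∀ᵐ ω ∂μ, ∀ K : ℕ, ∀ᶠ n in atTop, ∀ m, n ≤ m → τ m - τ n ≤ T →
      ‖∑ j ∈ Finset.Ico n m, γ j • ξ j ω‖ ≤ ((K:ℝ) + 1)⁻¹ := by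
    rw [ae_all_iff]
    exact fun K => KEY _ (by positivity)
  filter_upwards [KEYall] with ω hω
  rw [Metric.tendsto_atTop]
  intro ε hε
  obtain ⟨K, hK⟩ := exists_nat_gt (ε⁻¹)
  have hK1 : ε⁻¹ < (K:ℝ) + 1 := lt_trans hK (by linarith)
  have hKε : ((K:ℝ) + 1)⁻¹ < ε := by
    have h2 : (0:ℝ) < (K:ℝ) + 1 := by positivity
    rw [inv_lt_comm₀ h2 hε]
    exact hK1
  obtain ⟨n₀, hn₀⟩ := eventually_atTop.1 (hω K)
  refine ⟨n₀, fun n hn => ?_⟩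
  set Sn := {x : ℝ | ∃ m, n ≤ m ∧ τ m - τ n ≤ T ∧
      x = ‖∑ j ∈ Finset.Ico n m, γ j • ξ j ω‖} with hSn
  have hb : ∀ x ∈ Sn, x ≤ ((K:ℝ) + 1)⁻¹ := by
    rintro x ⟨m, h1, h2, rfl⟩
    exact hn₀ n hn m h1 h2
  have hne : Sn.Nonempty := ⟨0, hzero_mem ω n⟩
  have hbddA : BddAbove Sn := ⟨((K:ℝ) + 1)⁻¹, hb⟩
  have h1 : sSup Sn ≤ ((K:ℝ) + 1)⁻¹ := csSup_le hne hb
  have h2 : 0 ≤ sSup Sn := le_csSup hbddA (hzero_mem ω n)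
  calc dist (sSup Sn) 0 = |sSup Sn| := by simp [Real.dist_eq]
  _ = sSup Sn := abs_of_nonneg h2
  _ ≤ ((K:ℝ) + 1)⁻¹ := h1
  _ < ε := hKε
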